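/- arXiv:1308.5467 — 6 statements merged into one kernel-verified Lean document; each statement's English description precedes it below -/
import Mathlib

section
/- Given an (M+1)-step Lanczos factorization A V = V T + f e_Mᵀ of the real symmetric n×n matrix A (with T tridiagonal), one has A^j (V e_0) = V (T^j e_0) for every integer j with 0 ≤ j ≤ M. -/
open Matrix

lemma band_aux {M : ℕ} (T : Matrix (Fin (M + 1)) (Fin (M + 1)) ℝ)
    (htri : ∀ i j : Fin (M + 1), 1 < |(i : ℤ) - (j : ℤ)| → T i j = 0) :
    ∀ j : ℕ, ∀ i : Fin (M + 1), (j : ℤ) < (i : ℤ) →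
      (T ^ j).mulVec (Pi.single 0 1) i = 0 := by
  intro j
  induction j with
  | zero =>
    intro i hi
    have : i ≠ 0 := by intro h; subst h; simp at hi
    simp [Pi.single_apply, this]
  | succ j ih =>
    intro i hi
    rw [pow_succ', ← mulVec_mulVec, mulVec]
    apply Finset.sum_eq_zero
    intro k _
    rcases le_or_gt ((i : ℤ) - (k : ℤ)) 1 with h | h
    · have hk : (j : ℤ) < (k : ℤ) := by omega
      simp [ih k hk]
    · have : T i k = 0 := htri i k (by rw [abs_of_pos (by omega)]; exact h)
      simp [this]

/-- Given an `(M+1)`-step Lanczos factorization `A V = V T + f e_Mᵀ` of a real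
symmetric `n×n` matrix `A` (with `VᵀV = I`, `T` symmetric tridiagonal, `Vᵀ f = 0`),
one has `A^j (V e_0) = V (T^j e_0)` for every `0 ≤ j ≤ M`. -/
theorem lanczos_krylov_powers
    (n M : ℕ)
    (A : Matrix (Fin n) (Fin n) ℝ) (hA : A.IsSymm)
    (V : Matrix (Fin n) (Fin (M + 1)) ℝ)
    (T : Matrix (Fin (M + 1)) (Fin (M + 1)) ℝ)
    (f : Fin n → ℝ)
    (hV : Vᵀ * V = 1)
    (hT : T.IsSymm)
    (htri : ∀ i j : Fin (M + 1), 1 < |(i : ℤ) - (j : ℤ)| → T i j = 0)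
    (hVf : Vᵀ.mulVec f = 0)
    (hfac : A * V = V * T + Matrix.vecMulVec f (Pi.single (Fin.last M) 1)) :
    ∀ j : ℕ, j ≤ M →
      (A ^ j).mulVec (V.mulVec (Pi.single 0 1))
        = V.mulVec ((T ^ j).mulVec (Pi.single 0 1)) := by
  intro j
  induction j with
  | zero => intro _; simp only [pow_zero, one_mulVec]
  | succ j ih =>
    intro hj
    have hj' : j ≤ M := Nat.le_of_succ_le hj
    have hw : ((T ^ j).mulVec (Pi.single 0 1)) (Fin.last M) = 0 := by
      apply band_aux T htri
      simp only [Fin.val_last, Nat.cast_lt]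
      omega
    have hfw : (Matrix.vecMulVec f (Pi.single (Fin.last M) 1)).mulVec
        ((T ^ j).mulVec (Pi.single 0 1)) = 0 := by
      have hw' : (T ^ j) (Fin.last M) 0 = 0 := by
        simpa [mulVec, Pi.single_apply] using hw
      funext i
      simp [mulVec, vecMulVec_apply, dotProduct, Pi.single_apply, mul_assoc,
        hw']
    calc (A ^ (j+1)).mulVec (V.mulVec (Pi.single 0 1))
        = A.mulVec ((A ^ j).mulVec (V.mulVec (Pi.single 0 1))) := by
          rw [pow_succ', ← mulVec_mulVec]
      _ = A.mulVec (V.mulVec ((T ^ j).mulVec (Pi.single 0 1))) := by rw [ih hj']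
      _ = (A * V).mulVec ((T ^ j).mulVec (Pi.single 0 1)) := by rw [mulVec_mulVec]
      _ = V.mulVec ((T ^ (j+1)).mulVec (Pi.single 0 1)) := by
          rw [hfac, add_mulVec, hfw, add_zero, mulVec_mulVec, mulVec_mulVec,
            Matrix.mul_assoc, ← pow_succ']
end

section
/- Given an (M+1)-step Lanczos factorization A V = V T + f e_Mᵀ of the real symmetric n×n matrix A, with starting vector v_0 = V e_0, the Lanczos quadrature is exact for polynomials of degree up to 2M+1: for every real polynomial p with deg p ≤ 2M+1, one has v_0ᵀ p(A) v_0 = e_0ᵀ p(T) e_0. -/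
open Matrix

private lemma lanczos_sum_mulVec {n m : ℕ} (s : Finset ℕ)
    (B : ℕ → Matrix (Fin n) (Fin m) ℝ) (w : Fin m → ℝ) :
    ((∑ i ∈ s, B i) *ᵥ w) = ∑ i ∈ s, (B i *ᵥ w) := by
  ext j
  simp [mulVec, dotProduct, Matrix.sum_apply, Finset.sum_mul]
  rw [Finset.sum_comm]

private lemma lanczos_symm_dot {m : ℕ} (B : Matrix (Fin m) (Fin m) ℝ) (hB : B.IsSymm)
    (k : ℕ) (x y : Fin m → ℝ) :
    x ⬝ᵥ ((B ^ k) *ᵥ y) = ((B ^ k) *ᵥ x) ⬝ᵥ y := by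
  rw [dotProduct_mulVec, ← mulVec_transpose, transpose_pow, hB]

private lemma lanczos_dot_sum {m : ℕ} (s : Finset ℕ) (v : Fin m → ℝ) (w : ℕ → Fin m → ℝ) :
    v ⬝ᵥ (∑ i ∈ s, w i) = ∑ i ∈ s, v ⬝ᵥ w i := by
  simp only [dotProduct, Finset.sum_apply, Finset.mul_sum]
  rw [Finset.sum_comm]

/-- Given an `(M+1)`-step Lanczos factorization `A V = V T + f e_Mᵀ` of a real
symmetric matrix `A`, with starting vector `v₀ = V e₀`, the Lanczos quadrature is
exact for polynomials of degree up to `2M+1`: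
`v₀ᵀ p(A) v₀ = e₀ᵀ p(T) e₀` for every real polynomial `p` with `deg p ≤ 2M+1`. -/
theorem lanczos_quadrature_exact
    (n M : ℕ)
    (A : Matrix (Fin n) (Fin n) ℝ) (hA : A.IsSymm)
    (V : Matrix (Fin n) (Fin (M + 1)) ℝ)
    (T : Matrix (Fin (M + 1)) (Fin (M + 1)) ℝ)
    (f : Fin n → ℝ)
    (hV : Vᵀ * V = 1)
    (hT : T.IsSymm)
    (htri : ∀ i j : Fin (M + 1), 1 < |(i : ℤ) - (j : ℤ)| → T i j = 0)
    (hVf : Vᵀ.mulVec f = 0)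
    (hfac : A * V = V * T + Matrix.vecMulVec f (Pi.single (Fin.last M) 1))
    (v₀ : Fin n → ℝ) (hv₀ : v₀ = V.mulVec (Pi.single 0 1)) :
    ∀ p : Polynomial ℝ, p.natDegree ≤ 2 * M + 1 →
      v₀ ⬝ᵥ (Polynomial.aeval A p).mulVec v₀
        = (Pi.single 0 1 : Fin (M + 1) → ℝ) ⬝ᵥ
            (Polynomial.aeval T p).mulVec (Pi.single 0 1) := by
  intro p hp
  set e₀ : Fin (M + 1) → ℝ := Pi.single 0 1 with he₀
  -- support of T^k e₀
  have hsupp : ∀ (k : ℕ) (i : Fin (M + 1)), k < (i : ℕ) → ((T ^ k) *ᵥ e₀) i = 0 := by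
    intro k
    induction k with
    | zero =>
      intro i hi
      have hne : i ≠ 0 := by
        intro h; subst h; simp at hi
      simp [he₀, Pi.single_apply, hne]
    | succ k ih =>
      intro i hi
      rw [pow_succ', ← mulVec_mulVec]
      show ∑ j, T i j * ((T ^ k) *ᵥ e₀) j = 0
      apply Finset.sum_eq_zero
      intro j _
      by_cases hj : k < (j : ℕ)
      · rw [ih j hj, mul_zero]
      · have h1 : (1 : ℤ) < (i : ℤ) - (j : ℤ) := by
          have := i.isLt; have := j.isLt; push_cast; omega
        rw [htri i j (h1.trans_le (le_abs_self _)), zero_mul]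
  -- one multiplication step
  have hstep : ∀ x : Fin (M + 1) → ℝ,
      A *ᵥ (V *ᵥ x) = V *ᵥ (T *ᵥ x) + (x (Fin.last M)) • f := by
    intro x
    rw [mulVec_mulVec, hfac, add_mulVec, ← mulVec_mulVec]
    congr 1
    ext i
    simp [vecMulVec, mulVec, dotProduct, Pi.single_apply, mul_ite, mul_comm]
  -- A^k v₀ = V T^k e₀ for k ≤ M
  have hAk : ∀ k : ℕ, k ≤ M → (A ^ k) *ᵥ v₀ = V *ᵥ ((T ^ k) *ᵥ e₀) := by
    intro k
    induction k with
    | zero => intro _; rw [pow_zero, pow_zero, one_mulVec, one_mulVec, hv₀]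
    | succ k ih =>
      intro hk
      have hk' : k ≤ M := by omega
      rw [pow_succ', ← mulVec_mulVec, ih hk', hstep, hsupp k (Fin.last M) (by simp; omega),
        zero_smul, add_zero, mulVec_mulVec e₀ T (T ^ k), ← pow_succ']
  -- one extra step, with f-component
  have hAk1 : ∀ b : ℕ, b ≤ M + 1 →
      ∃ c : ℝ, (A ^ b) *ᵥ v₀ = V *ᵥ ((T ^ b) *ᵥ e₀) + c • f := by
    intro b hb
    rcases Nat.lt_or_ge b (M + 1) with hb' | hb'
    · exact ⟨0, by rw [hAk b (by omega), zero_smul, add_zero]⟩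
    · have hbM : b = M + 1 := by omega
      subst hbM
      refine ⟨((T ^ M) *ᵥ e₀) (Fin.last M), ?_⟩
      rw [pow_succ', ← mulVec_mulVec, hAk M le_rfl, hstep, mulVec_mulVec e₀ T (T ^ M), ← pow_succ']
  -- dot product helpers
  have hVV : ∀ x y : Fin (M + 1) → ℝ, (V *ᵥ x) ⬝ᵥ (V *ᵥ y) = x ⬝ᵥ y := by
    intro x y
    rw [dotProduct_mulVec, ← mulVec_transpose, mulVec_mulVec, hV, one_mulVec]
  have hVfd : ∀ x : Fin (M + 1) → ℝ, (V *ᵥ x) ⬝ᵥ f = 0 := by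
    intro x
    rw [dotProduct_comm, dotProduct_mulVec, ← mulVec_transpose, hVf, zero_dotProduct]
  -- monomial exactness
  have hmono : ∀ j : ℕ, j ≤ 2 * M + 1 →
      v₀ ⬝ᵥ ((A ^ j) *ᵥ v₀) = e₀ ⬝ᵥ ((T ^ j) *ᵥ e₀) := by
    intro j hj
    obtain ⟨a, b, hab, ha, hb⟩ : ∃ a b : ℕ, j = a + b ∧ a ≤ M ∧ b ≤ M + 1 :=
      ⟨min j M, j - min j M, by omega, by omega, by omega⟩
    obtain ⟨c, hc⟩ := hAk1 b hb
    subst hab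
    rw [pow_add, ← mulVec_mulVec, lanczos_symm_dot A hA, hAk a ha, hc, dotProduct_add,
      dotProduct_smul, hVfd, hVV, smul_zero, add_zero, ← lanczos_symm_dot T hT,
      mulVec_mulVec, ← pow_add]
  -- conclude by linearity
  have hdeg : p.natDegree < 2 * M + 2 := by omega
  rw [Polynomial.aeval_eq_sum_range' hdeg, Polynomial.aeval_eq_sum_range' hdeg,
    lanczos_sum_mulVec, lanczos_sum_mulVec, lanczos_dot_sum, lanczos_dot_sum]
  refine Finset.sum_congr rfl fun i hi => ?_
  have hi' : i ≤ 2 * M + 1 := by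
    have := Finset.mem_range.mp hi; omega
  rw [smul_mulVec, dotProduct_smul, smul_mulVec, dotProduct_smul,
    hmono i hi']
end

section
/- Let A be an n×n real symmetric matrix with spectral decomposition A = Σ_{j=1}^n λ_j u_j u_jᵀ, where u_1, …, u_n is an orthonormal basis of eigenvectors. Given an (M+1)-step Lanczos factorization A V = V T + f e_Mᵀ of A with starting vector v_0 = V e_0, write β_j = u_jᵀ v_0. Let T = Σ_{k=0}^{M} θ_k y_k y_kᵀ be a spectral decomposition of T with orthonormal eigenvectors y_0, …, y_M, and let τ_k = e_0ᵀ y_k be the first entry of y_k. Then for every real polynomial q of degree at most 2M+1, Σ_{j=1}^n β_j² q(λ_j) = Σ_{k=0}^M τ_k² q(θ_k). -/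
open Matrix

private lemma vmv_mul {N : ℕ} (a b c d : Fin N → ℝ) :
    vecMulVec a b * vecMulVec c d = (b ⬝ᵥ c) • vecMulVec a d := by
  ext i j
  simp only [Matrix.mul_apply, vecMulVec_apply, Matrix.smul_apply, smul_eq_mul,
    dotProduct, Finset.sum_mul]
  exact Finset.sum_congr rfl fun k _ => by ring

private lemma vmv_mulVec {N P : ℕ} (a : Fin N → ℝ) (b x : Fin P → ℝ) :
    vecMulVec a b *ᵥ x = (b ⬝ᵥ x) • a := by
  ext i
  simp only [Matrix.mulVec, vecMulVec_apply, dotProduct, Pi.smul_apply, smul_eq_mul,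
    Finset.sum_mul]
  exact Finset.sum_congr rfl fun k _ => by ring

private lemma mul_vmv {N P Q : ℕ} (B : Matrix (Fin N) (Fin P) ℝ) (f : Fin P → ℝ)
    (p : Fin Q → ℝ) : B * vecMulVec f p = vecMulVec (B *ᵥ f) p := by
  ext i j
  simp only [Matrix.mul_apply, vecMulVec_apply, Matrix.mulVec, dotProduct,
    Finset.sum_mul]
  exact Finset.sum_congr rfl fun k _ => by ring

private lemma sum_mulVec' {ι : Type*} (s : Finset ι) {N P : ℕ}
    (f : ι → Matrix (Fin N) (Fin P) ℝ) (x : Fin P → ℝ) :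
    (∑ j ∈ s, f j) *ᵥ x = ∑ j ∈ s, f j *ᵥ x := by
  ext i
  simp only [Matrix.mulVec, dotProduct, Matrix.sum_apply, Finset.sum_apply,
    Finset.sum_mul]
  exact Finset.sum_comm

private lemma dot_sum' {ι : Type*} (s : Finset ι) {N : ℕ} (x : Fin N → ℝ)
    (w : ι → Fin N → ℝ) : x ⬝ᵥ (∑ j ∈ s, w j) = ∑ j ∈ s, x ⬝ᵥ w j := by
  simp only [dotProduct, Finset.sum_apply, Finset.mul_sum]
  exact Finset.sum_comm

private lemma spec_complete {N : ℕ} (u : Fin N → Fin N → ℝ)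
    (hu : ∀ i j, u i ⬝ᵥ u j = if i = j then (1:ℝ) else 0) :
    ∑ j, vecMulVec (u j) (u j) = (1 : Matrix (Fin N) (Fin N) ℝ) := by
  have h1 : (Matrix.of u) * (Matrix.of u)ᵀ = 1 := by
    ext i j
    simpa [Matrix.mul_apply, dotProduct, Matrix.one_apply] using hu i j
  have h2 : (Matrix.of u)ᵀ * (Matrix.of u) = 1 := mul_eq_one_comm.mp h1
  rw [← h2]
  ext i k
  simp [Matrix.sum_apply, vecMulVec_apply, Matrix.mul_apply, Matrix.transpose_apply]

private lemma spec_pow {N : ℕ} (A : Matrix (Fin N) (Fin N) ℝ) (lam : Fin N → ℝ)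
    (u : Fin N → Fin N → ℝ)
    (hu : ∀ i j, u i ⬝ᵥ u j = if i = j then (1:ℝ) else 0)
    (hdec : A = ∑ j, lam j • vecMulVec (u j) (u j)) (m : ℕ) :
    A ^ m = ∑ j, (lam j ^ m) • vecMulVec (u j) (u j) := by
  induction m with
  | zero => simp [spec_complete u hu]
  | succ m ih =>
    rw [pow_succ, ih, hdec, Finset.sum_mul_sum]
    have key : ∀ i j : Fin N,
        ((lam i ^ m) • vecMulVec (u i) (u i)) * ((lam j) • vecMulVec (u j) (u j)) =
          if i = j then (lam i ^ (m+1)) • vecMulVec (u i) (u j) else 0 := by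
      intro i j
      rw [smul_mul_smul_comm, vmv_mul, hu, smul_smul]
      split_ifs with h
      · subst h; congr 1; ring
      · simp
    rw [Finset.sum_congr rfl fun i _ => Finset.sum_congr rfl fun j _ => key i j]
    refine Finset.sum_congr rfl fun i _ => ?_
    simp

private lemma quad_form {N : ℕ} (c : Fin N → ℝ) (u : Fin N → Fin N → ℝ) (x : Fin N → ℝ) :
    x ⬝ᵥ (∑ j, c j • vecMulVec (u j) (u j)) *ᵥ x = ∑ j, c j * (u j ⬝ᵥ x) ^ 2 := by
  rw [sum_mulVec', dot_sum']
  refine Finset.sum_congr rfl fun j _ => ?_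
  rw [Matrix.smul_mulVec, vmv_mulVec, dotProduct_smul, dotProduct_smul,
    smul_eq_mul, smul_eq_mul, dotProduct_comm x (u j)]
  ring

private lemma shift_dot {N P : ℕ} (B : Matrix (Fin N) (Fin P) ℝ) (x : Fin N → ℝ)
    (z : Fin P → ℝ) : x ⬝ᵥ (B *ᵥ z) = (Bᵀ *ᵥ x) ⬝ᵥ z := by
  rw [Matrix.dotProduct_mulVec]
  congr 1
  rw [← Matrix.vecMul_transpose, Matrix.transpose_transpose]

/-- Moment matching property of the Lanczos procedure: if `A = Σ λ_j u_j u_jᵀ` is a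
spectral decomposition of the real symmetric matrix `A`, `A V = V T + f e_Mᵀ` is an
`(M+1)`-step Lanczos factorization with starting vector `v₀ = V e₀`, `β_j = u_jᵀ v₀`,
`T = Σ θ_k y_k y_kᵀ` is a spectral decomposition of `T`, and `τ_k = e₀ᵀ y_k`, then
`Σ_j β_j² q(λ_j) = Σ_k τ_k² q(θ_k)` for all polynomials `q` of degree at most `2M+1`. -/
theorem lanczos_moment_matching
    (n M : ℕ)
    (A : Matrix (Fin n) (Fin n) ℝ) (hA : A.IsSymm)
    (lam : Fin n → ℝ) (u : Fin n → Fin n → ℝ)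
    (hu : ∀ i j : Fin n, u i ⬝ᵥ u j = if i = j then (1 : ℝ) else 0)
    (hAdecomp : A = ∑ j, lam j • Matrix.vecMulVec (u j) (u j))
    (V : Matrix (Fin n) (Fin (M + 1)) ℝ)
    (T : Matrix (Fin (M + 1)) (Fin (M + 1)) ℝ)
    (f : Fin n → ℝ)
    (hV : Vᵀ * V = 1)
    (hT : T.IsSymm)
    (htri : ∀ i j : Fin (M + 1), 1 < |(i : ℤ) - (j : ℤ)| → T i j = 0)
    (hVf : Vᵀ.mulVec f = 0)
    (hfac : A * V = V * T + Matrix.vecMulVec f (Pi.single (Fin.last M) 1))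
    (v₀ : Fin n → ℝ) (hv₀ : v₀ = V.mulVec (Pi.single 0 1))
    (β : Fin n → ℝ) (hβ : ∀ j, β j = u j ⬝ᵥ v₀)
    (θ : Fin (M + 1) → ℝ) (y : Fin (M + 1) → Fin (M + 1) → ℝ)
    (hy : ∀ k l : Fin (M + 1), y k ⬝ᵥ y l = if k = l then (1 : ℝ) else 0)
    (hTdecomp : T = ∑ k, θ k • Matrix.vecMulVec (y k) (y k))
    (τ : Fin (M + 1) → ℝ) (hτ : ∀ k, τ k = y k 0) :
    ∀ q : Polynomial ℝ, q.natDegree ≤ 2 * M + 1 →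
      ∑ j, (β j) ^ 2 * q.eval (lam j) = ∑ k, (τ k) ^ 2 * q.eval (θ k) := by
  set e₀ : Fin (M + 1) → ℝ := Pi.single 0 1 with he₀
  have momA : ∀ m : ℕ, ∑ j, (β j) ^ 2 * lam j ^ m = v₀ ⬝ᵥ (A ^ m) *ᵥ v₀ := by
    intro m
    rw [spec_pow A lam u hu hAdecomp m, quad_form]
    exact Finset.sum_congr rfl fun j _ => by rw [hβ]; ring
  have momT : ∀ m : ℕ, ∑ k, (τ k) ^ 2 * θ k ^ m = e₀ ⬝ᵥ (T ^ m) *ᵥ e₀ := by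
    intro m
    rw [spec_pow T θ y hy hTdecomp m, quad_form]
    refine Finset.sum_congr rfl fun k _ => ?_
    rw [hτ, he₀, dotProduct_single]
    ring
  have tri : ∀ m : ℕ, ∀ i : Fin (M + 1), (m : ℕ) < (i : ℕ) → ((T ^ m) *ᵥ e₀) i = 0 := by
    intro m
    induction m with
    | zero =>
      intro i hi
      have hne : i ≠ 0 := by
        intro h; rw [h] at hi; simp at hi
      simp [he₀, Pi.single_eq_of_ne hne, Matrix.one_apply_ne hne]
    | succ m ih =>
      intro i hi
      rw [pow_succ', ← Matrix.mulVec_mulVec]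
      show ∑ j, T i j * ((T ^ m) *ᵥ e₀) j = 0
      refine Finset.sum_eq_zero fun j _ => ?_
      by_cases hj : (m : ℕ) < (j : ℕ)
      · rw [ih j hj, mul_zero]
      · have hTij : T i j = 0 := by
          apply htri
          push_neg at hj
          rw [lt_abs]
          left
          omega
        rw [hTij, zero_mul]
  have krylov : ∀ a : ℕ, a ≤ M → (A ^ a) *ᵥ v₀ = V *ᵥ ((T ^ a) *ᵥ e₀) := by
    intro a
    induction a with
    | zero => intro _; simp [hv₀]
    | succ a ih =>
      intro ha
      have ha' : a ≤ M := Nat.le_of_succ_le ha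
      rw [pow_succ', ← Matrix.mulVec_mulVec, ih ha', Matrix.mulVec_mulVec, hfac,
        Matrix.add_mulVec, vmv_mulVec]
      have hlast : (Pi.single (Fin.last M) 1 : Fin (M+1) → ℝ) ⬝ᵥ ((T ^ a) *ᵥ e₀) = 0 := by
        rw [single_dotProduct, one_mul]
        apply tri
        simp only [Fin.val_last]
        omega
      rw [hlast, zero_smul, add_zero, pow_succ', ← Matrix.mulVec_mulVec,
        ← Matrix.mulVec_mulVec]
  have hVAV : Vᵀ * A * V = T := by
    rw [Matrix.mul_assoc, hfac, Matrix.mul_add, mul_vmv, hVf, ← Matrix.mul_assoc, hV,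
      Matrix.one_mul]
    have : vecMulVec (0 : Fin (M+1) → ℝ) (Pi.single (Fin.last M) (1:ℝ)) = 0 := by
      ext i j; simp [vecMulVec_apply]
    rw [this, add_zero]
  have hApow : ∀ a : ℕ, (A ^ a)ᵀ = A ^ a := fun a => (hA.pow a)
  have hTpow : ∀ a : ℕ, (T ^ a)ᵀ = T ^ a := fun a => (hT.pow a)
  have mom : ∀ m : ℕ, m ≤ 2 * M + 1 →
      v₀ ⬝ᵥ (A ^ m) *ᵥ v₀ = e₀ ⬝ᵥ (T ^ m) *ᵥ e₀ := by
    intro m hm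
    obtain ⟨a, ε, b, ha, hε, hb, habc⟩ :
        ∃ a ε b : ℕ, a ≤ M ∧ ε ≤ 1 ∧ b ≤ M ∧ m = a + ε + b := by
      rcases le_or_gt m M with h | h
      · exact ⟨m, 0, 0, h, by omega, by omega, by omega⟩
      · rcases le_or_gt m (2 * M) with h2 | h2
        · exact ⟨M, 0, m - M, le_rfl, by omega, by omega, by omega⟩
        · exact ⟨M, 1, M, le_rfl, le_rfl, le_rfl, by omega⟩
    subst habc
    have split : ∀ (B : Matrix (Fin n) (Fin n) ℝ),
        v₀ ⬝ᵥ ((A ^ a * B * A ^ b) *ᵥ v₀)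
          = ((A ^ a) *ᵥ v₀) ⬝ᵥ (B *ᵥ ((A ^ b) *ᵥ v₀)) := by
      intro B
      rw [← Matrix.mulVec_mulVec, ← Matrix.mulVec_mulVec, shift_dot, hApow]
    have splitT : ∀ (S : Matrix (Fin (M+1)) (Fin (M+1)) ℝ),
        e₀ ⬝ᵥ ((T ^ a * S * T ^ b) *ᵥ e₀)
          = ((T ^ a) *ᵥ e₀) ⬝ᵥ (S *ᵥ ((T ^ b) *ᵥ e₀)) := by
      intro S
      rw [← Matrix.mulVec_mulVec, ← Matrix.mulVec_mulVec, shift_dot, hTpow]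
    have hAe : A ^ (a + ε + b) = A ^ a * A ^ ε * A ^ b := by
      rw [pow_add, pow_add]
    have hTe : T ^ (a + ε + b) = T ^ a * T ^ ε * T ^ b := by
      rw [pow_add, pow_add]
    rw [hAe, hTe, split, splitT, krylov a ha, krylov b hb]
    interval_cases ε
    · rw [pow_zero, pow_zero, Matrix.one_mulVec, Matrix.one_mulVec, shift_dot V,
        Matrix.mulVec_mulVec, hV, Matrix.one_mulVec]
    · rw [pow_one, pow_one,
        dotProduct_comm (V *ᵥ ((T ^ a) *ᵥ e₀)), shift_dot V,
        Matrix.mulVec_mulVec, Matrix.mulVec_mulVec, hVAV, dotProduct_comm]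
  intro q hq
  have hq' : q.natDegree < 2 * M + 2 := by omega
  calc ∑ j, (β j) ^ 2 * q.eval (lam j)
      = ∑ j, ∑ m ∈ Finset.range (2 * M + 2), (β j) ^ 2 * (q.coeff m * lam j ^ m) := by
        refine Finset.sum_congr rfl fun j _ => ?_
        rw [Polynomial.eval_eq_sum_range' hq', Finset.mul_sum]
    _ = ∑ m ∈ Finset.range (2 * M + 2), q.coeff m * ∑ j, (β j) ^ 2 * lam j ^ m := by
        rw [Finset.sum_comm]
        refine Finset.sum_congr rfl fun m _ => ?_
        rw [Finset.mul_sum]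
        exact Finset.sum_congr rfl fun j _ => by ring
    _ = ∑ m ∈ Finset.range (2 * M + 2), q.coeff m * ∑ k, (τ k) ^ 2 * θ k ^ m := by
        refine Finset.sum_congr rfl fun m hm => ?_
        rw [momA, momT, mom m (by simp only [Finset.mem_range] at hm; omega)]
    _ = ∑ m ∈ Finset.range (2 * M + 2), ∑ k, (τ k) ^ 2 * (q.coeff m * θ k ^ m) := by
        refine Finset.sum_congr rfl fun m _ => ?_
        rw [Finset.mul_sum]
        exact Finset.sum_congr rfl fun k _ => by ring
    _ = ∑ k, ∑ m ∈ Finset.range (2 * M + 2), (τ k) ^ 2 * (q.coeff m * θ k ^ m) :=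
        Finset.sum_comm
    _ = ∑ k, (τ k) ^ 2 * q.eval (θ k) := by
        refine Finset.sum_congr rfl fun k _ => ?_
        rw [Polynomial.eval_eq_sum_range' hq', Finset.mul_sum]
end

section
/- Given an (M+1)-step Lanczos factorization A V = V T + f e_Mᵀ of the real symmetric n×n matrix A, regard A, T, V, f, and v_0 = V e_0 as complex matrices/vectors, and let z = t + iη with t, η ∈ ℝ and η ≠ 0. Then A − zI and T − zI are invertible, and v_0ᵀ (A − zI)⁻¹ v_0 = e_0ᵀ (T − zI)⁻¹ e_0 − ( v_0ᵀ (A − zI)⁻¹ f ) ( e_Mᵀ (T − zI)⁻¹ e_0 ). -/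
open Matrix

lemma herm_sub_smul_isUnit {m : Type*} [Fintype m] [DecidableEq m]
    (H : Matrix m m ℂ) (hH : H.IsHermitian) (z : ℂ) (hz : z.im ≠ 0) :
    IsUnit (H - z • 1) := by
  rw [← Matrix.mulVec_injective_iff_isUnit]
  have key : ∀ x, (H - z • 1) *ᵥ x = 0 → x = 0 := by
    intro x hx
    have hHx : H *ᵥ x = z • x := by
      have := hx
      rw [Matrix.sub_mulVec, Matrix.smul_mulVec, Matrix.one_mulVec, sub_eq_zero] at this
      exact this
    set s : ℂ := star x ⬝ᵥ x with hs
    have hsstar : star s = s := by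
      rw [hs, ← Matrix.star_dotProduct_star, star_star]
    have hc : star x ⬝ᵥ (H *ᵥ x) = z * s := by
      rw [hHx, dotProduct_smul, smul_eq_mul]
    have hcc : star (star x ⬝ᵥ (H *ᵥ x)) = star x ⬝ᵥ (H *ᵥ x) := by
      rw [← Matrix.star_dotProduct_star, star_star, Matrix.star_mulVec, hH.eq,
        ← Matrix.dotProduct_mulVec]
    rw [hc, star_mul', hsstar] at hcc
    have hzs : (star z - z) * s = 0 := by ring_nf; linear_combination hcc
    have hs0 : s = 0 := by
      rcases mul_eq_zero.mp hzs with h | h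
      · exfalso
        apply hz
        have := congrArg Complex.im h
        simp [Complex.sub_im, Complex.conj_im] at this
        linarith
      · exact h
    have hsum : s = ((∑ i, Complex.normSq (x i) : ℝ) : ℂ) := by
      rw [hs]
      simp [dotProduct, Complex.normSq_eq_conj_mul_self, Pi.star_apply, Complex.star_def]
    rw [hsum] at hs0
    have : (∑ i, Complex.normSq (x i) : ℝ) = 0 := by exact_mod_cast hs0
    funext i
    have hi : Complex.normSq (x i) = 0 := by
      have := (Finset.sum_eq_zero_iff_of_nonneg
        (fun i _ => Complex.normSq_nonneg (x i))).mp this i (Finset.mem_univ i)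
      exact this
    exact Complex.normSq_eq_zero.mp hi
  intro a b hab
  have : (H - z • 1) *ᵥ (a - b) = 0 := by
    rw [Matrix.mulVec_sub, hab, sub_self]
  exact sub_eq_zero.mp (key _ this)

lemma vecMulVec_mulVec' {m k : Type*} [Fintype k] (a : m → ℂ) (b : k → ℂ) (w : k → ℂ) :
    Matrix.vecMulVec a b *ᵥ w = (b ⬝ᵥ w) • a := by
  funext i
  simp [Matrix.mulVec, Matrix.vecMulVec_apply, dotProduct, Finset.mul_sum,
    mul_assoc, mul_comm, mul_left_comm]

/-- Given an `(M+1)`-step Lanczos factorization `A V = V T + f e_Mᵀ` of the real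
symmetric matrix `A`, regarded over `ℂ`, and `z = t + iη` with `η ≠ 0`, the matrices
`A − zI` and `T − zI` are invertible and
`v₀ᵀ (A − zI)⁻¹ v₀ = e₀ᵀ (T − zI)⁻¹ e₀ − (v₀ᵀ (A − zI)⁻¹ f)(e_Mᵀ (T − zI)⁻¹ e₀)`. -/
theorem lanczos_resolvent_identity
    (n M : ℕ)
    (A : Matrix (Fin n) (Fin n) ℝ) (hA : A.IsSymm)
    (V : Matrix (Fin n) (Fin (M + 1)) ℝ)
    (T : Matrix (Fin (M + 1)) (Fin (M + 1)) ℝ)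
    (f : Fin n → ℝ)
    (hV : Vᵀ * V = 1)
    (hT : T.IsSymm)
    (htri : ∀ i j : Fin (M + 1), 1 < |(i : ℤ) - (j : ℤ)| → T i j = 0)
    (hVf : Vᵀ.mulVec f = 0)
    (hfac : A * V = V * T + Matrix.vecMulVec f (Pi.single (Fin.last M) 1))
    (t η : ℝ) (hη : η ≠ 0) (z : ℂ) (hz : z = t + η * Complex.I)
    (Ac : Matrix (Fin n) (Fin n) ℂ) (hAc : Ac = A.map (Complex.ofReal : ℝ → ℂ))
    (Tc : Matrix (Fin (M + 1)) (Fin (M + 1)) ℂ)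
    (hTc : Tc = T.map (Complex.ofReal : ℝ → ℂ))
    (fc : Fin n → ℂ) (hfc : fc = fun i => (f i : ℂ))
    (v₀ : Fin n → ℂ)
    (hv₀ : v₀ = (V.map (Complex.ofReal : ℝ → ℂ)).mulVec (Pi.single 0 1)) :
    IsUnit (Ac - z • (1 : Matrix (Fin n) (Fin n) ℂ)) ∧
    IsUnit (Tc - z • (1 : Matrix (Fin (M + 1)) (Fin (M + 1)) ℂ)) ∧
    v₀ ⬝ᵥ (Ac - z • 1)⁻¹.mulVec v₀
      = (Pi.single 0 1 : Fin (M + 1) → ℂ) ⬝ᵥ (Tc - z • 1)⁻¹.mulVec (Pi.single 0 1)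
        - (v₀ ⬝ᵥ (Ac - z • 1)⁻¹.mulVec fc)
          * ((Pi.single (Fin.last M) 1 : Fin (M + 1) → ℂ) ⬝ᵥ
              (Tc - z • 1)⁻¹.mulVec (Pi.single 0 1)) := by
  set Vc := V.map (Complex.ofReal : ℝ → ℂ) with hVc
  have hzim : z.im ≠ 0 := by
    rw [hz]; simpa using hη
  -- Hermitian
  have hAherm : Ac.IsHermitian := by
    rw [hAc]
    apply Matrix.IsHermitian.ext
    intro i j
    have : A j i = A i j := by
      conv_lhs => rw [← hA]
      rfl
    simp [Matrix.map_apply, Complex.star_def, this]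
  have hTherm : Tc.IsHermitian := by
    rw [hTc]
    apply Matrix.IsHermitian.ext
    intro i j
    have : T j i = T i j := by
      conv_lhs => rw [← hT]
      rfl
    simp [Matrix.map_apply, Complex.star_def, this]
  have hUA : IsUnit (Ac - z • (1 : Matrix (Fin n) (Fin n) ℂ)) :=
    herm_sub_smul_isUnit Ac hAherm z hzim
  have hUT : IsUnit (Tc - z • (1 : Matrix (Fin (M + 1)) (Fin (M + 1)) ℂ)) :=
    herm_sub_smul_isUnit Tc hTherm z hzim
  refine ⟨hUA, hUT, ?_⟩
  set NA := Ac - z • (1 : Matrix (Fin n) (Fin n) ℂ) with hNA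
  set NT := Tc - z • (1 : Matrix (Fin (M + 1)) (Fin (M + 1)) ℂ) with hNT
  have hUAdet : IsUnit NA.det := (Matrix.isUnit_iff_isUnit_det _).mp hUA
  have hUTdet : IsUnit NT.det := (Matrix.isUnit_iff_isUnit_det _).mp hUT
  have hAinv : NA⁻¹ * NA = 1 := Matrix.nonsing_inv_mul _ hUAdet
  have hAinv' : NA * NA⁻¹ = 1 := Matrix.mul_nonsing_inv _ hUAdet
  have hTinv : NT * NT⁻¹ = 1 := Matrix.mul_nonsing_inv _ hUTdet
  -- complexified factorization
  have hfacC : Ac * Vc = Vc * Tc + Matrix.vecMulVec fc (Pi.single (Fin.last M) 1) := by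
    subst hAc hTc hfc; rw [hVc]
    ext i j
    have h := congrArg (Complex.ofReal) (congrFun (congrFun hfac i) j)
    push_cast [Matrix.mul_apply, Matrix.add_apply, Matrix.vecMulVec_apply, Pi.single_apply,
      apply_ite (Complex.ofReal)] at h
    simpa [Matrix.mul_apply, Matrix.add_apply, Matrix.vecMulVec_apply, Pi.single_apply] using h
  -- complexified orthonormality
  have hVVc : Vcᵀ * Vc = 1 := by
    rw [hVc]
    ext i j
    have h := congrArg (Complex.ofReal) (congrFun (congrFun hV i) j)
    push_cast [Matrix.mul_apply, Matrix.one_apply, apply_ite (Complex.ofReal)] at h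
    simpa [Matrix.mul_apply, Matrix.one_apply] using h
  -- shifted factorization
  have hkey : NA * Vc = Vc * NT + Matrix.vecMulVec fc (Pi.single (Fin.last M) 1) := by
    rw [hNA, hNT, Matrix.sub_mul, Matrix.mul_sub, hfacC]
    simp only [Matrix.smul_mul, Matrix.mul_smul, Matrix.one_mul, Matrix.mul_one]
    abel
  -- resolvent identity at the matrix level
  have hmain : Vc * NT⁻¹
      = NA⁻¹ * Vc + NA⁻¹ * Matrix.vecMulVec fc (Pi.single (Fin.last M) 1) * NT⁻¹ := by
    have e1 : Vc * NT⁻¹ = (NA⁻¹ * NA) * (Vc * NT⁻¹) := by rw [hAinv, Matrix.one_mul]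
    have e2 : (NA⁻¹ * NA) * (Vc * NT⁻¹) = NA⁻¹ * ((NA * Vc) * NT⁻¹) := by
      rw [Matrix.mul_assoc NA⁻¹ NA (Vc * NT⁻¹), ← Matrix.mul_assoc NA Vc NT⁻¹]
    rw [e1, e2, hkey]
    have e3 : NA⁻¹ * ((Vc * NT + Matrix.vecMulVec fc (Pi.single (Fin.last M) 1)) * NT⁻¹)
        = NA⁻¹ * Vc * (NT * NT⁻¹)
          + NA⁻¹ * Matrix.vecMulVec fc (Pi.single (Fin.last M) 1) * NT⁻¹ := by
      rw [Matrix.add_mul, Matrix.mul_add]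
      simp only [Matrix.mul_assoc]
    rw [e3, hTinv, Matrix.mul_one]
  -- vector level
  set e₀ : Fin (M + 1) → ℂ := Pi.single 0 1 with he₀
  set eM : Fin (M + 1) → ℂ := Pi.single (Fin.last M) 1 with heM
  have hvec : Vc *ᵥ (NT⁻¹ *ᵥ e₀)
      = NA⁻¹ *ᵥ v₀ + (eM ⬝ᵥ (NT⁻¹ *ᵥ e₀)) • (NA⁻¹ *ᵥ fc) := by
    have h := congrArg (fun X => X *ᵥ e₀) hmain
    simp only [Matrix.add_mulVec, ← Matrix.mulVec_mulVec] at h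
    rw [h, ← hv₀, vecMulVec_mulVec', Matrix.mulVec_smul]
  have hvV : v₀ ᵥ* Vc = e₀ := by
    rw [hv₀, ← Matrix.transpose_transpose Vc, Matrix.mulVec_transpose,
      Matrix.transpose_transpose, Matrix.vecMul_vecMul, hVVc, Matrix.vecMul_one]
  calc v₀ ⬝ᵥ NA⁻¹ *ᵥ v₀
      = v₀ ⬝ᵥ (NA⁻¹ *ᵥ v₀ + (eM ⬝ᵥ (NT⁻¹ *ᵥ e₀)) • (NA⁻¹ *ᵥ fc))
        - (v₀ ⬝ᵥ NA⁻¹ *ᵥ fc) * (eM ⬝ᵥ NT⁻¹ *ᵥ e₀) := by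
        rw [dotProduct_add, dotProduct_smul, smul_eq_mul]
        ring
    _ = v₀ ⬝ᵥ (Vc *ᵥ (NT⁻¹ *ᵥ e₀))
        - (v₀ ⬝ᵥ NA⁻¹ *ᵥ fc) * (eM ⬝ᵥ NT⁻¹ *ᵥ e₀) := by rw [← hvec]
    _ = e₀ ⬝ᵥ NT⁻¹ *ᵥ e₀ - (v₀ ⬝ᵥ NA⁻¹ *ᵥ fc) * (eM ⬝ᵥ NT⁻¹ *ᵥ e₀) := by
        rw [Matrix.dotProduct_mulVec v₀ Vc, hvV]
end

section
/- For every k ∈ ℕ, σ > 0, and t ∈ ℝ, ∫_{−1}^{1} s · L_k(s) · e^{−(s−t)²/(2σ²)} ds = σ² (ψ_k(t) − ζ_k(t)) + t · γ_k(t). -/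
open MeasureTheory intervalIntegral

/-- The Legendre polynomials: `L₀ = 1`, `L₁ = X`, and
`(k+1) L_{k+1}(x) = (2k+1) x L_k(x) − k L_{k−1}(x)`. -/
noncomputable def legendre : ℕ → Polynomial ℝ
  | 0 => 1
  | 1 => Polynomial.X
  | (k + 2) =>
      ((2 * ((k : ℝ) + 1) + 1) / ((k : ℝ) + 2)) • (Polynomial.X * legendre (k + 1))
        - (((k : ℝ) + 1) / ((k : ℝ) + 2)) • legendre k

/-- `γ_k(t) = ∫_{−1}^{1} L_k(s) e^{−(s−t)²/(2σ²)} ds`. -/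
noncomputable def legGamma (σ : ℝ) (k : ℕ) (t : ℝ) : ℝ :=
  ∫ s in (-1 : ℝ)..1, (legendre k).eval s * Real.exp (-(s - t) ^ 2 / (2 * σ ^ 2))

/-- `ψ_k(t) = ∫_{−1}^{1} L_k′(s) e^{−(s−t)²/(2σ²)} ds`. -/
noncomputable def legPsi (σ : ℝ) (k : ℕ) (t : ℝ) : ℝ :=
  ∫ s in (-1 : ℝ)..1,
    ((legendre k).derivative).eval s * Real.exp (-(s - t) ^ 2 / (2 * σ ^ 2))

/-- `ζ_k(t) = e^{−(1−t)²/(2σ²)} − (−1)^k e^{−(1+t)²/(2σ²)}`. -/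
noncomputable def legZeta (σ : ℝ) (k : ℕ) (t : ℝ) : ℝ :=
  Real.exp (-(1 - t) ^ 2 / (2 * σ ^ 2))
    - (-1 : ℝ) ^ k * Real.exp (-(1 + t) ^ 2 / (2 * σ ^ 2))

lemma legendre_eval_pair : ∀ k : ℕ, (legendre k).eval 1 = 1 ∧ (legendre k).eval (-1) = (-1)^k := by
  have H : ∀ k : ℕ, ((legendre k).eval 1 = 1 ∧ (legendre k).eval (-1) = (-1)^k) ∧
      ((legendre (k+1)).eval 1 = 1 ∧ (legendre (k+1)).eval (-1) = (-1)^(k+1)) := by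
    intro k
    induction k with
    | zero => simp [legendre]
    | succ n ih =>
      refine ⟨ih.2, ?_, ?_⟩
      · have h : (n:ℝ) + 2 ≠ 0 := by positivity
        show (legendre (n+2)).eval 1 = 1
        simp [legendre, ih.1.1, ih.2.1]
        field_simp
        ring
      · have h : (n:ℝ) + 2 ≠ 0 := by positivity
        show (legendre (n+2)).eval (-1) = (-1)^(n+2)
        simp [legendre, ih.1.2, ih.2.2]
        field_simp
        ring
  exact fun k => (H k).1

/-- For every `k ∈ ℕ`, `σ > 0` and `t ∈ ℝ`,
`∫_{−1}^{1} s L_k(s) e^{−(s−t)²/(2σ²)} ds = σ²(ψ_k(t) − ζ_k(t)) + t γ_k(t)`. -/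
theorem legendre_gaussian_first_moment (k : ℕ) (σ t : ℝ) (hσ : 0 < σ) :
    ∫ s in (-1 : ℝ)..1, s * (legendre k).eval s * Real.exp (-(s - t) ^ 2 / (2 * σ ^ 2))
      = σ ^ 2 * (legPsi σ k t - legZeta σ k t) + t * legGamma σ k t := by
  have hσ2 : σ ^ 2 ≠ 0 := by positivity
  set E : ℝ → ℝ := fun s => Real.exp (-(s - t) ^ 2 / (2 * σ ^ 2)) with hEdef
  have hEcont : Continuous E := by
    apply Real.continuous_exp.comp
    continuity
  have hv : ∀ s : ℝ, HasDerivAt (fun s => -σ ^ 2 * E s) ((s - t) * E s) s := by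
    intro s
    have hd : HasDerivAt (fun s : ℝ => s - t) 1 s := (hasDerivAt_id s).sub_const t
    have hd2 : HasDerivAt (fun s : ℝ => (s - t) ^ 2) ((2 : ℕ) * (s - t) ^ (2 - 1) * 1) s := hd.pow 2
    have hd3 : HasDerivAt (fun s : ℝ => -(s - t) ^ 2 / (2 * σ ^ 2))
        (-((2 : ℕ) * (s - t) ^ (2 - 1) * 1) / (2 * σ ^ 2)) s := (hd2.neg).div_const (2 * σ ^ 2)
    have hexp := hd3.exp
    have : HasDerivAt (fun y => -σ ^ 2 * E y)
        (-σ ^ 2 * (E s * (-((2 : ℕ) * (s - t) ^ (2 - 1) * 1) / (2 * σ ^ 2)))) s :=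
      hexp.const_mul (-σ ^ 2)
    refine this.congr_deriv ?_
    simp only [pow_one, mul_one]
    field_simp
    ring
  -- continuity of integrands
  have hcP : Continuous fun s => ((legendre k).derivative).eval s :=
    (legendre k).derivative.continuous_aeval
  have hcL : Continuous fun s => (legendre k).eval s := (legendre k).continuous_aeval
  have hint1 : IntervalIntegrable (fun s => ((legendre k).derivative).eval s) volume (-1) 1 :=
    hcP.intervalIntegrable _ _
  have hint2 : IntervalIntegrable (fun s => (s - t) * E s) volume (-1) 1 :=
    (((continuous_id.sub continuous_const).mul hEcont)).intervalIntegrable _ _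
  have hparts := intervalIntegral.integral_mul_deriv_eq_deriv_mul
    (u := fun s => (legendre k).eval s) (u' := fun s => ((legendre k).derivative).eval s)
    (v := fun s => -σ ^ 2 * E s) (v' := fun s => (s - t) * E s)
    (fun x _ => (legendre k).hasDerivAt x) (fun x _ => hv x) hint1
    hint2
  have hL1 := (legendre_eval_pair k).1
  have hLm1 := (legendre_eval_pair k).2
  have hpsirw : (∫ s in (-1:ℝ)..1, ((legendre k).derivative).eval s * (-σ ^ 2 * E s))
      = -σ ^ 2 * legPsi σ k t := by
    rw [legPsi, ← intervalIntegral.integral_const_mul]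
    congr 1
    funext s
    ring
  beta_reduce at hparts
  rw [hpsirw, hL1, hLm1] at hparts
  -- split the main integral
  have hsplit : (∫ s in (-1:ℝ)..1, s * (legendre k).eval s * E s)
      = (∫ s in (-1:ℝ)..1, (legendre k).eval s * ((s - t) * E s))
        + t * ∫ s in (-1:ℝ)..1, (legendre k).eval s * E s := by
    have hI1 : IntervalIntegrable (fun s => (legendre k).eval s * ((s - t) * E s))
        volume (-1) 1 := by
      apply Continuous.intervalIntegrable
      exact hcL.mul ((continuous_id.sub continuous_const).mul hEcont)
    have hI2 : IntervalIntegrable (fun s => t * ((legendre k).eval s * E s))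
        volume (-1) 1 := by
      apply Continuous.intervalIntegrable
      exact continuous_const.mul (hcL.mul hEcont)
    rw [← intervalIntegral.integral_const_mul, ← intervalIntegral.integral_add hI1 hI2]
    congr 1
    funext s
    ring
  rw [hsplit, hparts]
  have hE1 : E 1 = Real.exp (-(1 - t) ^ 2 / (2 * σ ^ 2)) := rfl
  have hEm1 : E (-1) = Real.exp (-(1 + t) ^ 2 / (2 * σ ^ 2)) := by
    show Real.exp (-((-1 : ℝ) - t) ^ 2 / (2 * σ ^ 2)) = _
    norm_num
    ring_nf
  rw [hE1, hEm1, legZeta, legGamma]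
  ring
end

section
/- For every σ > 0, t ∈ ℝ, and k ≥ 1 (and also for k = 0 with the convention γ_{−1}(t) = 0), the Legendre–Gaussian moments satisfy the recurrence (k+1) γ_{k+1}(t) = (2k+1) [ σ² (ψ_k(t) − ζ_k(t)) + t γ_k(t) ] − k γ_{k−1}(t). -/
open MeasureTheory intervalIntegral

lemma legendre_eval_one : ∀ k : ℕ, (legendre k).eval 1 = 1
  | 0 => by simp [legendre]
  | 1 => by simp [legendre]
  | (k + 2) => by
    have h1 := legendre_eval_one k
    have h2 := legendre_eval_one (k + 1)
    have hk : ((k : ℝ) + 2) ≠ 0 := by positivity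
    simp only [legendre, Polynomial.eval_sub, Polynomial.eval_smul, Polynomial.eval_mul,
      Polynomial.eval_X, h1, h2, smul_eq_mul]
    field_simp
    ring

lemma legendre_eval_neg_one : ∀ k : ℕ, (legendre k).eval (-1) = (-1) ^ k
  | 0 => by simp [legendre]
  | 1 => by simp [legendre]
  | (k + 2) => by
    have h1 := legendre_eval_neg_one k
    have h2 := legendre_eval_neg_one (k + 1)
    have hk : ((k : ℝ) + 2) ≠ 0 := by positivity
    simp only [legendre, Polynomial.eval_sub, Polynomial.eval_smul, Polynomial.eval_mul,
      Polynomial.eval_X, h1, h2, smul_eq_mul, pow_succ]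
    field_simp
    ring

lemma contG (σ t : ℝ) : Continuous fun s : ℝ => Real.exp (-(s - t) ^ 2 / (2 * σ ^ 2)) := by
  fun_prop

lemma key_integral (σ t : ℝ) (hσ : 0 < σ) (k : ℕ) :
    ∫ s in (-1 : ℝ)..1, s * (legendre k).eval s * Real.exp (-(s - t) ^ 2 / (2 * σ ^ 2))
      = σ ^ 2 * (legPsi σ k t - legZeta σ k t) + t * legGamma σ k t := by
  set G : ℝ → ℝ := fun s => Real.exp (-(s - t) ^ 2 / (2 * σ ^ 2)) with hG
  have hσ2 : (2 * σ ^ 2) ≠ 0 := by positivity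
  have hGc : Continuous G := contG σ t
  have hv : ∀ s : ℝ, HasDerivAt (fun s => -σ ^ 2 * G s) ((s - t) * G s) s := by
    intro s
    have h1 : HasDerivAt (fun s : ℝ => -(s - t) ^ 2 / (2 * σ ^ 2))
        (-(2 * (s - t)) / (2 * σ ^ 2)) s := by
      have := (((hasDerivAt_id s).sub_const t).pow 2).neg.div_const (2 * σ ^ 2)
      simpa using this
    have h2 := h1.exp
    have h3 := h2.const_mul (-σ ^ 2)
    refine h3.congr_deriv ?_
    simp only [hG]
    field_simp
  have hu : ∀ s : ℝ, HasDerivAt (fun s => (legendre k).eval s)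
      ((legendre k).derivative.eval s) s := fun s => (legendre k).hasDerivAt s
  have hparts := intervalIntegral.integral_mul_deriv_eq_deriv_mul
    (u := fun s => (legendre k).eval s) (v := fun s => -σ ^ 2 * G s)
    (u' := fun s => (legendre k).derivative.eval s) (v' := fun s => (s - t) * G s)
    (a := (-1 : ℝ)) (b := 1)
    (fun x _ => hu x) (fun x _ => hv x)
    ((legendre k).derivative.continuous.intervalIntegrable _ _)
    ((Continuous.mul (by fun_prop) hGc).intervalIntegrable _ _)
  have hsplit : ∀ s : ℝ, s * (legendre k).eval s * G s
      = (legendre k).eval s * ((s - t) * G s) + t * ((legendre k).eval s * G s) := by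
    intro s; ring
  have hint1 : IntervalIntegrable (fun s => (legendre k).eval s * ((s - t) * G s))
      volume (-1 : ℝ) 1 := by
    apply Continuous.intervalIntegrable; fun_prop
  have hint2 : IntervalIntegrable (fun s => t * ((legendre k).eval s * G s))
      volume (-1 : ℝ) 1 := by
    apply Continuous.intervalIntegrable; fun_prop
  calc ∫ s in (-1 : ℝ)..1, s * (legendre k).eval s * G s
      = ∫ s in (-1 : ℝ)..1, ((legendre k).eval s * ((s - t) * G s)
          + t * ((legendre k).eval s * G s)) := by
        apply intervalIntegral.integral_congr
        intro s _; exact hsplit s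
    _ = (∫ s in (-1 : ℝ)..1, (legendre k).eval s * ((s - t) * G s))
          + ∫ s in (-1 : ℝ)..1, t * ((legendre k).eval s * G s) :=
        intervalIntegral.integral_add hint1 hint2
    _ = σ ^ 2 * (legPsi σ k t - legZeta σ k t) + t * legGamma σ k t := by
        rw [hparts, intervalIntegral.integral_const_mul]
        have e1 : (∫ s in (-1 : ℝ)..1, (legendre k).derivative.eval s * (-σ ^ 2 * G s))
            = -σ ^ 2 * legPsi σ k t := by
          rw [legPsi, ← intervalIntegral.integral_const_mul]
          apply intervalIntegral.integral_congr
          intro s _; ring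
        rw [e1]
        simp only [legendre_eval_one, legendre_eval_neg_one, legGamma, legZeta, hG]
        have hGm1 : Real.exp (-(-1 - t) ^ 2 / (2 * σ ^ 2))
            = Real.exp (-(1 + t) ^ 2 / (2 * σ ^ 2)) := by ring_nf
        rw [hGm1]
        ring

/-- For every `σ > 0`, `t ∈ ℝ` and `k ≥ 1` (and also `k = 0` with the convention
`γ_{−1}(t) = 0`), the Legendre–Gaussian moments satisfy
`(k+1) γ_{k+1}(t) = (2k+1)[σ²(ψ_k(t) − ζ_k(t)) + t γ_k(t)] − k γ_{k−1}(t)`. -/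
theorem legendre_gaussian_moment_recurrence (σ t : ℝ) (hσ : 0 < σ) :
    ∀ k : ℕ, ((k : ℝ) + 1) * legGamma σ (k + 1) t
      = (2 * (k : ℝ) + 1) * (σ ^ 2 * (legPsi σ k t - legZeta σ k t) + t * legGamma σ k t)
        - (k : ℝ) * (if k = 0 then 0 else legGamma σ (k - 1) t) := by
  intro k
  set G : ℝ → ℝ := fun s => Real.exp (-(s - t) ^ 2 / (2 * σ ^ 2)) with hG
  have hGc : Continuous G := contG σ t
  match k with
  | 0 =>
    simp only [Nat.cast_zero, if_pos rfl]
    have h := key_integral σ t hσ 0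
    have : legGamma σ 1 t = ∫ s in (-1 : ℝ)..1, s * (legendre 0).eval s * G s := by
      rw [legGamma]
      apply intervalIntegral.integral_congr
      intro s _
      simp [legendre, G]
    rw [this, h]
    ring
  | (m + 1) =>
    have hm2 : ((m : ℝ) + 2) ≠ 0 := by positivity
    simp only [Nat.cast_add, Nat.cast_one, if_neg (Nat.succ_ne_zero m), Nat.add_sub_cancel]
    have hexp : legGamma σ (m + 2) t
        = ((2 * ((m : ℝ) + 1) + 1) / ((m : ℝ) + 2))
            * (∫ s in (-1 : ℝ)..1, s * (legendre (m + 1)).eval s * G s)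
          - (((m : ℝ) + 1) / ((m : ℝ) + 2)) * legGamma σ m t := by
      rw [legGamma, legGamma]
      have : ∀ s : ℝ, (legendre (m + 2)).eval s * G s
          = ((2 * ((m : ℝ) + 1) + 1) / ((m : ℝ) + 2)) * (s * (legendre (m + 1)).eval s * G s)
            - (((m : ℝ) + 1) / ((m : ℝ) + 2)) * ((legendre m).eval s * G s) := by
        intro s
        simp only [legendre, Polynomial.eval_sub, Polynomial.eval_smul, Polynomial.eval_mul,
          Polynomial.eval_X, smul_eq_mul]
        ring
      rw [intervalIntegral.integral_congr (fun s _ => this s)]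
      rw [intervalIntegral.integral_sub, intervalIntegral.integral_const_mul,
        intervalIntegral.integral_const_mul]
      · apply Continuous.intervalIntegrable
        have := (legendre (m+1)).continuous
        fun_prop
      · apply Continuous.intervalIntegrable
        have := (legendre m).continuous
        fun_prop
    rw [hexp, key_integral σ t hσ (m + 1)]

    field_simp
    ring
end
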